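/- Let T, α, h, δ > 0 with 4δ ≤ h, let n ≥ 1, and let 0 = s_0 < s_1 < ⋯ < s_n = T and 0 = s'_0 < s'_1 < ⋯ < s'_n = T be two partitions of [0,T] with |s_i − s'_i| ≤ δ for all i and s_{i+1} − s_i ≥ h for all i < n. Let y_0, …, y_n ∈ ℝ^d satisfy |y_{i+1} − y_i| ≤ α for all i < n, and let f, f' : [0,T] → ℝ^d be the piecewise linear interpolations determined by f(s_i) = y_i and f'(s'_i) = y_i for all i. Then sup_{u ∈ [0,T]} |f(u) − f'(u)| ≤ 8 α δ / h. -/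

import Mathlib

noncomputable section

private lemma exists_mem_interval (n : ℕ) (hn : 1 ≤ n) (s : ℕ → ℝ) (u : ℝ)
    (h0 : s 0 ≤ u) (h1 : u ≤ s n) : ∃ i < n, s i ≤ u ∧ u ≤ s (i + 1) := by
  induction n with
  | zero => omega
  | succ m ih =>
    rcases Nat.eq_or_lt_of_le hn with h | h
    · have hm : m = 0 := by omega
      subst hm
      exact ⟨0, Nat.one_pos, h0, h1⟩
    · rcases le_or_gt u (s m) with hle | hlt
      · obtain ⟨i, hi, hiu⟩ := ih (by omega) hle
        exact ⟨i, by omega, hiu⟩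
      · exact ⟨m, by omega, hlt.le, h1⟩

private lemma ratio_bound {t D δ h : ℝ} (ht0 : 0 ≤ t) (htδ : t ≤ δ) (hD : h / 2 ≤ D)
    (hh : 0 < h) (hδ : 0 < δ) : t / D ≤ 2 * δ / h := by
  have hD0 : 0 < D := by linarith
  rw [div_le_div_iff₀ hD0 hh]
  nlinarith

private lemma lam_bound {a b D D' δ h : ℝ} (hh : 0 < h) (hδ : 0 < δ) (hδh : 4 * δ ≤ h)
    (ha0 : 0 ≤ a) (haD : a ≤ D) (hab : |a - b| ≤ δ) (hD : h ≤ D) (hDD' : |D - D'| ≤ 2 * δ) :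
    |a / D - b / D'| ≤ 6 * δ / h := by
  rw [abs_le] at hab hDD'
  have hD0 : 0 < D := lt_of_lt_of_le hh hD
  have hD'0 : 0 < D' := by linarith
  have e : a / D - b / D' = (a * D' - b * D) / (D * D') := by
    field_simp
  rw [e, abs_div, abs_of_pos (mul_pos hD0 hD'0), div_le_div_iff₀ (mul_pos hD0 hD'0) hh]
  have hnum : |a * D' - b * D| ≤ 3 * δ * D := by
    rw [abs_le]
    constructor
    · nlinarith [mul_nonneg ha0 (show (0:ℝ) ≤ D' - (D - 2 * δ) by linarith),
        mul_nonneg (show (0:ℝ) ≤ (a + δ) - b by linarith) hD0.le,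
        mul_nonneg (show (0:ℝ) ≤ D - a by linarith) hδ.le]
    · nlinarith [mul_nonneg ha0 (show (0:ℝ) ≤ D + 2 * δ - D' by linarith),
        mul_nonneg (show (0:ℝ) ≤ b - (a - δ) by linarith) hD0.le,
        mul_nonneg (show (0:ℝ) ≤ D - a by linarith) hδ.le]
  nlinarith [mul_le_mul_of_nonneg_right hnum hh.le,
    mul_nonneg (mul_nonneg hδ.le hD0.le) (show (0:ℝ) ≤ 2 * D' - h by linarith)]

/-- Deterministic stability estimate for piecewise linear interpolations (Step 1 of
Appendix B): if `f` and `f'` are the piecewise linear interpolations through the same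
spatial nodes `y_0, …, y_n` (with consecutive increments of norm at most `α`) over two
`δ`-close time grids `0 = s_0 < ⋯ < s_n = T` and `0 = s'_0 < ⋯ < s'_n = T`, the first of
which has mesh gaps at least `h ≥ 4δ`, then `sup_{u ∈ [0,T]} ‖f(u) − f'(u)‖ ≤ 8αδ/h`. -/
theorem piecewise_linear_interpolation_stability
    (T α h δ : ℝ) (hT : 0 < T) (hα : 0 < α) (hh : 0 < h) (hδ : 0 < δ)
    (hδh : 4 * δ ≤ h) (d : ℕ) (n : ℕ) (hn : 1 ≤ n)
    (s s' : ℕ → ℝ) (y : ℕ → EuclideanSpace ℝ (Fin d))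
    (hs0 : s 0 = 0) (hs'0 : s' 0 = 0) (hsn : s n = T) (hs'n : s' n = T)
    (hmono : ∀ i < n, s i < s (i + 1)) (hmono' : ∀ i < n, s' i < s' (i + 1))
    (hclose : ∀ i ≤ n, |s i - s' i| ≤ δ)
    (hgap : ∀ i < n, h ≤ s (i + 1) - s i)
    (hy : ∀ i < n, ‖y (i + 1) - y i‖ ≤ α)
    (f f' : ℝ → EuclideanSpace ℝ (Fin d))
    (hf : ∀ i < n, ∀ u ∈ Set.Icc (s i) (s (i + 1)),
      f u = y i + ((u - s i) / (s (i + 1) - s i)) • (y (i + 1) - y i))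
    (hf' : ∀ i < n, ∀ u ∈ Set.Icc (s' i) (s' (i + 1)),
      f' u = y i + ((u - s' i) / (s' (i + 1) - s' i)) • (y (i + 1) - y i)) :
    ∀ u ∈ Set.Icc (0:ℝ) T, ‖f u - f' u‖ ≤ 8 * α * δ / h := by
  intro u hu
  obtain ⟨hu0, huT⟩ := hu
  -- mesh gaps of the second grid
  have gap' : ∀ i < n, h - 2 * δ ≤ s' (i + 1) - s' i := by
    intro i hi
    have c1 := hclose i hi.le
    have c2 := hclose (i + 1) hi
    have g := hgap i hi
    rw [abs_le] at c1 c2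
    linarith
  -- locate u in the first grid
  obtain ⟨i, hi, hiu, hui⟩ := exists_mem_interval n hn s u (hs0 ▸ hu0) (hsn ▸ huT)
  have hfu := hf i hi u ⟨hiu, hui⟩
  have hgapi := hgap i hi
  have hΔ : 0 < s (i + 1) - s i := lt_of_lt_of_le hh hgapi
  have hci := hclose i hi.le
  have hci1 := hclose (i + 1) hi
  rw [abs_le] at hci hci1
  have hyi := hy i hi
  have bound8 : (6:ℝ) * δ / h * α ≤ 8 * α * δ / h := by
    rw [div_mul_eq_mul_div, div_le_div_iff₀ hh hh]
    nlinarith [mul_pos (mul_pos hα hδ) hh]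
  have bound4 : (2:ℝ) * δ / h * α + 2 * δ / h * α ≤ 8 * α * δ / h := by
    rw [div_mul_eq_mul_div, ← add_div, div_le_div_iff₀ hh hh]
    nlinarith [mul_pos (mul_pos hα hδ) hh]
  rcases lt_or_ge u (s' i) with hcase2 | hge
  · -- u < s' i : u lies in the (i-1)-th interval of the second grid
    obtain ⟨j, rfl⟩ : ∃ j, i = j + 1 := by
      cases i with
      | zero => exact absurd hcase2 (by rw [hs'0]; exact not_lt.2 hu0)
      | succ j => exact ⟨j, rfl⟩
    have hjn : j < n := by omega
    have gj := gap' j hjn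
    have cj := hclose j hjn.le
    rw [abs_le] at cj
    have hmem' : u ∈ Set.Icc (s' j) (s' (j + 1)) := by
      constructor
      · linarith
      · exact hcase2.le
    have hf'u := hf' j hjn u hmem'
    have hyj := hy j hjn
    -- decompose
    have hdec : f u - f' u = (f u - y (j + 1)) + (y (j + 1) - f' u) := by abel
    have h1 : f u - y (j + 1)
        = ((u - s (j + 1)) / (s (j + 2) - s (j + 1))) • (y (j + 2) - y (j + 1)) := by
      rw [hfu]; abel
    have h2 : y (j + 1) - f' u
        = (1 - (u - s' j) / (s' (j + 1) - s' j)) • (y (j + 1) - y j) := by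
      rw [hf'u, sub_smul, one_smul]; abel
    have hΔ'j : 0 < s' (j + 1) - s' j := sub_pos.2 (hmono' j hjn)
    have e2 : 1 - (u - s' j) / (s' (j + 1) - s' j)
        = (s' (j + 1) - u) / (s' (j + 1) - s' j) := by
      field_simp; ring
    have b1 : ‖f u - y (j + 1)‖ ≤ 2 * δ / h * α := by
      rw [h1, norm_smul, Real.norm_eq_abs]
      refine mul_le_mul ?_ hyi (norm_nonneg _) (by positivity)
      rw [abs_of_nonneg (div_nonneg (by linarith) hΔ.le)]
      exact ratio_bound (by linarith) (by linarith) (by linarith) hh hδ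
    have b2 : ‖y (j + 1) - f' u‖ ≤ 2 * δ / h * α := by
      rw [h2, norm_smul, Real.norm_eq_abs, e2]
      refine mul_le_mul ?_ hyj (norm_nonneg _) (by positivity)
      rw [abs_of_nonneg (div_nonneg (by linarith) hΔ'j.le)]
      exact ratio_bound (by linarith) (by linarith) (by linarith) hh hδ
    calc ‖f u - f' u‖ ≤ ‖f u - y (j + 1)‖ + ‖y (j + 1) - f' u‖ := by
          rw [hdec]; exact norm_add_le _ _
      _ ≤ 2 * δ / h * α + 2 * δ / h * α := add_le_add b1 b2
      _ ≤ 8 * α * δ / h := bound4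
  · rcases le_or_gt u (s' (i + 1)) with hle | hcase3
    · -- middle case
      have hf'u := hf' i hi u ⟨hge, hle⟩
      have hΔ' : 0 < s' (i + 1) - s' i := sub_pos.2 (hmono' i hi)
      have hdiff : f u - f' u
          = ((u - s i) / (s (i + 1) - s i) - (u - s' i) / (s' (i + 1) - s' i))
            • (y (i + 1) - y i) := by
        rw [hfu, hf'u, sub_smul]; abel
      rw [hdiff, norm_smul, Real.norm_eq_abs]
      have key : |(u - s i) / (s (i + 1) - s i) - (u - s' i) / (s' (i + 1) - s' i)|
          ≤ 6 * δ / h := by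
        apply lam_bound hh hδ hδh (by linarith) (by linarith) ?_ hgapi ?_
        · rw [abs_le]; constructor <;> linarith
        · rw [abs_le]; constructor <;> linarith
      calc |(u - s i) / (s (i + 1) - s i) - (u - s' i) / (s' (i + 1) - s' i)|
            * ‖y (i + 1) - y i‖ ≤ 6 * δ / h * α :=
            mul_le_mul key hyi (norm_nonneg _) (by positivity)
        _ ≤ 8 * α * δ / h := bound8
    · -- u > s' (i+1) : u lies in the (i+1)-th interval of the second grid
      have hi1n : i + 1 < n := by
        rcases Nat.lt_or_ge (i + 1) n with h' | h'
        · exact h'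
        · exfalso
          have : i + 1 = n := by omega
          rw [this, hs'n] at hcase3
          linarith
      have gi1 := gap' (i + 1) hi1n
      have ci2 := hclose (i + 2) hi1n
      rw [abs_le] at ci2
      have hmem' : u ∈ Set.Icc (s' (i + 1)) (s' (i + 2)) := by
        constructor
        · exact hcase3.le
        · linarith
      have hf'u := hf' (i + 1) hi1n u hmem'
      have hyi1 := hy (i + 1) hi1n
      have hdec : f u - f' u = (f u - y (i + 1)) + (y (i + 1) - f' u) := by abel
      have h1 : f u - y (i + 1)
          = ((u - s i) / (s (i + 1) - s i) - 1) • (y (i + 1) - y i) := by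
        rw [hfu, sub_smul, one_smul]; abel
      have e1 : (u - s i) / (s (i + 1) - s i) - 1
          = -((s (i + 1) - u) / (s (i + 1) - s i)) := by
        field_simp; ring
      have h2 : y (i + 1) - f' u
          = -(((u - s' (i + 1)) / (s' (i + 2) - s' (i + 1))) • (y (i + 2) - y (i + 1))) := by
        rw [hf'u]; abel
      have b1 : ‖f u - y (i + 1)‖ ≤ 2 * δ / h * α := by
        rw [h1, norm_smul, Real.norm_eq_abs, e1, abs_neg]
        refine mul_le_mul ?_ hyi (norm_nonneg _) (by positivity)
        rw [abs_of_nonneg (div_nonneg (by linarith) hΔ.le)]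
        exact ratio_bound (by linarith) (by linarith) (by linarith) hh hδ
      have b2 : ‖y (i + 1) - f' u‖ ≤ 2 * δ / h * α := by
        rw [h2, norm_neg, norm_smul, Real.norm_eq_abs]
        have hΔ'1 : 0 < s' (i + 2) - s' (i + 1) := sub_pos.2 (hmono' (i + 1) hi1n)
        refine mul_le_mul ?_ hyi1 (norm_nonneg _) (by positivity)
        rw [abs_of_nonneg (div_nonneg (by linarith) hΔ'1.le)]
        exact ratio_bound (by linarith) (by linarith) (by linarith) hh hδ
      calc ‖f u - f' u‖ ≤ ‖f u - y (i + 1)‖ + ‖y (i + 1) - f' u‖ := by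
            rw [hdec]; exact norm_add_le _ _
        _ ≤ 2 * δ / h * α + 2 * δ / h * α := add_le_add b1 b2
        _ ≤ 8 * α * δ / h := bound4

end
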